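/- A cycle Cₙ of length n is S-connected if and only if |S| ≥ n+1. -/

import Mathlib

open Finset

/-- A finite loopless multigraph: each edge `e` has two distinct endpoints
`fst e` and `snd e` (this pair serves as a reference orientation). -/
structure Multigraph (V : Type) (E : Type) where
  fst : E → V
  snd : E → V
  loopless : ∀ e, fst e ≠ snd e

namespace Multigraph

variable {V E : Type}

/-- The head of edge `e` under the orientation `o` (a Boolean switch per edge). -/
def head (G : Multigraph V E) (o : E → Bool) (e : E) : V :=
  if o e then G.fst e else G.snd e

/-- The tail of edge `e` under the orientation `o`. -/
def tail (G : Multigraph V E) (o : E → Bool) (e : E) : V :=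
  if o e then G.snd e else G.fst e

/-- The boundary `∂φ(u)`: sum of `φ` over edges directed out of `u`
minus the sum over edges directed into `u`.  (An edge is directed out of
its tail and into its head.) -/
def boundary [Fintype E] [DecidableEq V] {S : Type} [AddCommGroup S]
    (G : Multigraph V E) (o : E → Bool) (φ : E → S) (u : V) : S :=
  (∑ e : E, if G.tail o e = u then φ e else 0)
    - ∑ e : E, if G.head o e = u then φ e else 0

/-- `G` is `S`-connected: every zero-sum boundary function is realized by a
nowhere-zero mapping under some orientation. -/
def GroupConnected [Fintype V] [Fintype E] [DecidableEq V]
    (G : Multigraph V E) (S : Type) [AddCommGroup S] : Prop :=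
  ∀ β : V → S, ∑ v : V, β v = 0 →
    ∃ (o : E → Bool) (φ : E → S), (∀ e, φ e ≠ 0) ∧ ∀ u, G.boundary o φ u = β u

/-- Degree of a vertex: number of edge-ends at it. -/
def degree [Fintype E] [DecidableEq V] (G : Multigraph V E) (v : V) : ℕ :=
  (univ.filter fun e => G.fst e = v).card + (univ.filter fun e => G.snd e = v).card

/-- Adjacency via some edge. -/
def Adj (G : Multigraph V E) (u v : V) : Prop :=
  ∃ e, (G.fst e = u ∧ G.snd e = v) ∨ (G.fst e = v ∧ G.snd e = u)

/-- Connectivity of a multigraph. -/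
def Connected (G : Multigraph V E) : Prop :=
  Nonempty V ∧ ∀ u v : V, Relation.ReflTransGen G.Adj u v

/-- Delete a set of edges. -/
def deleteEdges (G : Multigraph V E) (F : Set E) : Multigraph V {e : E // e ∉ F} where
  fst e := G.fst e.1
  snd e := G.snd e.1
  loopless e := G.loopless e.1

/-- `G` has edge-connectivity at least `k`. -/
def EdgeConnAtLeast (G : Multigraph V E) (k : ℕ) : Prop :=
  ∀ F : Finset E, F.card < k → (G.deleteEdges ↑F).Connected

/-- Orientation-free boundary, suitable for groups of exponent 2. -/
def ubnd [Fintype E] [DecidableEq V] {S : Type} [AddCommGroup S]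
    (G : Multigraph V E) (φ : E → S) (v : V) : S :=
  ∑ e : E, ((if G.fst e = v then φ e else 0) + (if G.snd e = v then φ e else 0))

/-- The subgraph with vertex set `R` and edge set `F`. -/
def restrict (G : Multigraph V E) (R : Set V) (F : Set E)
    (hF : ∀ e ∈ F, G.fst e ∈ R ∧ G.snd e ∈ R) : Multigraph R F where
  fst e := ⟨G.fst e.1, (hF e.1 e.2).1⟩
  snd e := ⟨G.snd e.1, (hF e.1 e.2).2⟩
  loopless e h := G.loopless e.1 (congrArg Subtype.val h)

end Multigraph

/-- The cycle `Cₙ` of length `n ≥ 2`: vertices `ZMod n`, with an edge from `i` to `i+1`. -/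
def cycleGraph (n : ℕ) [NeZero n] (hn : 2 ≤ n) : Multigraph (ZMod n) (ZMod n) where
  fst := id
  snd := fun i => i + 1
  loopless := by
    intro e h
    haveI : Fact (1 < n) := ⟨hn⟩
    have h0 : e + 0 = e + 1 := by rw [add_zero]; exact h
    exact one_ne_zero ((add_left_cancel h0).symm)

section Aux

variable {S : Type} [AddCommGroup S]

/-- Key formula: the boundary of the cycle at `u` is `ψ u - ψ (u-1)`, where
`ψ e = ±φ e` according to the orientation. -/
lemma cycle_boundary (n : ℕ) [NeZero n] (hn : 2 ≤ n) (o : ZMod n → Bool)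
    (φ : ZMod n → S) (u : ZMod n) :
    (cycleGraph n hn).boundary o φ u
      = (if o u then -φ u else φ u) - (if o (u-1) then -φ (u-1) else φ (u-1)) := by
  classical
  haveI : Fact (1 < n) := ⟨hn⟩
  have hone : (1 : ZMod n) ≠ 0 := one_ne_zero
  unfold Multigraph.boundary
  rw [← Finset.sum_sub_distrib]
  have key : ∀ e : ZMod n,
      ((if (cycleGraph n hn).tail o e = u then φ e else 0)
        - (if (cycleGraph n hn).head o e = u then φ e else 0))
      = (if e = u then (if o u then -φ u else φ u) else 0)
        + (if e = u - 1 then -(if o (u-1) then -φ (u-1) else φ (u-1)) else 0) := by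
    intro e
    have hne : u ≠ u - 1 := by
      intro h
      exact hone (sub_eq_self.mp h.symm)
    simp only [Multigraph.tail, Multigraph.head, cycleGraph, id_eq]
    by_cases h1 : e = u
    · subst h1
      have h2 : e + 1 ≠ e := by
        intro h
        exact hone (add_left_cancel (show e + 1 = e + 0 by rw [add_zero]; exact h))
      rcases Bool.eq_false_or_eq_true (o e) with h | h <;>
        simp only [h, Bool.false_eq_true, if_false, if_true, if_pos rfl,
          if_neg h2, if_neg hne] <;> abel
    · by_cases h3 : e = u - 1
      · subst h3
        have h4 : u - 1 + 1 = u := by ring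
        rcases Bool.eq_false_or_eq_true (o (u - 1)) with h | h <;>
          simp only [h, Bool.false_eq_true, if_false, if_true, if_pos rfl, if_pos h4,
            if_neg (Ne.symm hne), if_neg hne] <;> abel
      · have h5 : e + 1 ≠ u := by
          intro h
          exact h3 (by rw [← h]; ring)
        rcases Bool.eq_false_or_eq_true (o e) with h | h <;>
          simp only [h, Bool.false_eq_true, if_false, if_true, if_neg h1, if_neg h3,
            if_neg h5] <;> abel
  rw [Finset.sum_congr rfl (fun e _ => key e)]
  rw [Finset.sum_add_distrib]
  rw [Finset.sum_ite_eq' Finset.univ u (fun _ => if o u then -φ u else φ u)]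
  rw [Finset.sum_ite_eq' Finset.univ (u - 1)
    (fun _ => -(if o (u-1) then -φ (u-1) else φ (u-1)))]
  simp [sub_eq_add_neg]

set_option linter.unusedSectionVars false in
lemma const_of_step {n : ℕ} [NeZero n] (d : ZMod n → S)
    (h : ∀ u, d u = d (u - 1)) : ∀ u, d u = d 0 := by
  have key : ∀ k : ℕ, d (k : ZMod n) = d 0 := by
    intro k
    induction k with
    | zero => simp
    | succ m ih =>
        have : ((m + 1 : ℕ) : ZMod n) - 1 = (m : ZMod n) := by push_cast; ring
        rw [h ((m + 1 : ℕ) : ZMod n), this, ih]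
  intro u
  have := key u.val
  rwa [ZMod.natCast_rightInverse u] at this

lemma sum_zmod_range {n : ℕ} [NeZero n] (f : ZMod n → S) :
    ∑ k ∈ Finset.range n, f (k : ZMod n) = ∑ v : ZMod n, f v := by
  refine Finset.sum_nbij' (i := fun k => ((k : ℕ) : ZMod n)) (j := fun v => v.val)
    ?_ ?_ ?_ ?_ ?_
  · intro a _; exact Finset.mem_univ _
  · intro v _; exact Finset.mem_range.mpr (ZMod.val_lt v)
  · intro a ha; exact ZMod.val_cast_of_lt (Finset.mem_range.mp ha)
  · intro v _; exact ZMod.natCast_rightInverse v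
  · intro a _; rfl

end Aux

/-- the cycle `Cₙ` is `S`-connected iff `|S| ≥ n + 1`. -/
theorem cycle_groupConnected_iff (n : ℕ) [NeZero n] (hn : 2 ≤ n)
    (S : Type) [AddCommGroup S] [Fintype S] :
    (cycleGraph n hn).GroupConnected S ↔ n + 1 ≤ Fintype.card S := by
  classical
  constructor
  · -- if Cₙ is S-connected then |S| ≥ n + 1
    intro h
    by_contra hlt
    push_neg at hlt
    have hcard : Fintype.card S ≤ n := by omega
    -- get a surjection s : ZMod n → S
    obtain ⟨f⟩ : Nonempty (S ↪ ZMod n) := by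
      apply Function.Embedding.nonempty_of_card_le
      simpa [ZMod.card] using hcard
    set s : ZMod n → S := Function.invFun f with hs
    have hsurj : Function.Surjective s := Function.invFun_surjective f.injective
    set β : ZMod n → S := fun u => s u - s (u - 1) with hβ
    have hsum : ∑ v : ZMod n, β v = 0 := by
      rw [hβ]
      rw [Finset.sum_sub_distrib]
      rw [sub_eq_zero]
      exact Fintype.sum_equiv (Equiv.addRight (1 : ZMod n)) _ _
        (fun u => by simp)
    obtain ⟨o, φ, hφ, hb⟩ := h β hsum
    set ψ : ZMod n → S := fun e => if o e then -φ e else φ e with hψdef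
    have hψ : ∀ u, ψ u - ψ (u - 1) = β u := by
      intro u
      rw [← hb u]
      exact (cycle_boundary n hn o φ u).symm
    set d : ZMod n → S := fun u => ψ u - s u with hd
    have hstep : ∀ u, d u = d (u - 1) := by
      intro u
      have h := hψ u
      rw [hβ] at h
      exact sub_eq_sub_iff_sub_eq_sub.mp h
    have hconst := const_of_step d hstep
    obtain ⟨u, hu⟩ := hsurj (s 0 - ψ 0)
    have hzero : ψ u = 0 := by
      have h1 : ψ u - s u = ψ 0 - s 0 := hconst u
      have h2 : ψ u = ψ 0 - s 0 + s u := by rw [← h1]; abel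
      rw [h2, hu]; abel
    have : ψ u ≠ 0 := by
      simp only [hψdef]
      cases h : o u <;> simp [h, hφ u]
    exact this hzero
  · -- if |S| ≥ n + 1 then Cₙ is S-connected
    intro hcard β hβ
    set s : ZMod n → S := fun u => ∑ k ∈ Finset.range (u.val + 1), β (k : ZMod n)
      with hs
    have hstep : ∀ u, s u - s (u - 1) = β u := by
      intro u
      by_cases hu : u = 0
      · subst hu
        have h0 : s 0 = β 0 := by simp [hs, ZMod.val_zero]
        have hneg : ((n - 1 : ℕ) : ZMod n) = (0 : ZMod n) - 1 := by
          rw [Nat.cast_sub (show 1 ≤ n by omega), ZMod.natCast_self, Nat.cast_one]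
        have hval : ((0 : ZMod n) - 1).val = n - 1 := by
          rw [← hneg]; exact ZMod.val_cast_of_lt (by omega)
        have h1 : s (0 - 1) = 0 := by
          rw [hs]
          simp only [hval]
          rw [show n - 1 + 1 = n by omega]
          rw [sum_zmod_range]
          exact hβ
        rw [h0, h1, sub_zero]
      · have hval : u.val ≠ 0 := fun hv => hu ((ZMod.val_eq_zero u).mp hv)
        have hcast : ((u.val - 1 : ℕ) : ZMod n) = u - 1 := by
          push_cast [Nat.cast_sub (show 1 ≤ u.val by omega)]
          rw [ZMod.natCast_rightInverse u]
        have hval2 : (u - 1).val = u.val - 1 := by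
          rw [← hcast]; exact ZMod.val_cast_of_lt (by have := ZMod.val_lt u; omega)
        have h2 : s (u - 1) = ∑ k ∈ Finset.range u.val, β (k : ZMod n) := by
          rw [hs]; simp only [hval2]
          rw [show u.val - 1 + 1 = u.val by omega]
        rw [hs] at *
        simp only [h2]
        rw [Finset.sum_range_succ]
        rw [ZMod.natCast_rightInverse u]
        abel
    -- pick c avoiding the n forbidden values
    have hex : ∃ c : S, ∀ u : ZMod n, s u + c ≠ 0 := by
      by_contra hc
      push_neg at hc
      have hsub : (Finset.univ : Finset S) ⊆ Finset.univ.image (fun u : ZMod n => -(s u)) := by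
        intro c _
        obtain ⟨u, hu⟩ := hc c
        exact Finset.mem_image.mpr ⟨u, Finset.mem_univ u,
          neg_eq_of_add_eq_zero_right hu⟩
      have h1 : Fintype.card S ≤ (Finset.univ.image (fun u : ZMod n => -(s u))).card := by
        rw [← Finset.card_univ]
        exact Finset.card_le_card hsub
      have h2 : (Finset.univ.image (fun u : ZMod n => -(s u))).card ≤ n := by
        refine le_trans Finset.card_image_le ?_
        rw [Finset.card_univ, ZMod.card]
      omega
    obtain ⟨c, hc⟩ := hex
    refine ⟨fun _ => false, fun e => s e + c, fun e => hc e, fun u => ?_⟩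
    rw [cycle_boundary n hn]
    simp only [Bool.false_eq_true, if_false]
    rw [← hstep u]
    abel
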